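/- For k ≥ 2, the sum ∑ log p over triples (p, r, m) with p prime, r ≥ 2, m ≥ 1 and p^r·m^k ≤ x satisfies the bound O(x^{1/2} log x) for k = 2 and O(x^{1/2}) for k ≥ 3. -/

import Mathlib

open Filter Asymptotics Finset
open scoped Classical

private lemma theta_le (N : ℕ) :
    ∑ p ∈ (Finset.range (N + 1)).filter Nat.Prime, Real.log p ≤ N * Real.log 4 := by
  have h0 : ∀ p ∈ (Finset.range (N + 1)).filter Nat.Prime, ((p : ℝ)) ≠ 0 := by
    intro p hp
    simp only [Finset.mem_filter] at hp
    exact_mod_cast hp.2.pos.ne'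
  rw [← Real.log_prod h0]
  have h1 : ∏ p ∈ (Finset.range (N + 1)).filter Nat.Prime, (p : ℝ)
      = ((primorial N : ℕ) : ℝ) := by
    rw [primorial]; push_cast; rfl
  rw [h1]
  calc Real.log ((primorial N : ℕ) : ℝ) ≤ Real.log ((4 : ℝ) ^ N) := by
        apply Real.log_le_log (by exact_mod_cast primorial_pos N)
        exact_mod_cast primorial_le_4_pow N
    _ = N * Real.log 4 := Real.log_pow 4 N

private lemma geo_le {c : ℝ} (h0 : 0 ≤ c) (h1 : c < 1) (n : ℕ) :
    ∑ i ∈ Finset.range n, c ^ i ≤ (1 - c)⁻¹ := by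
  have hc : 0 < 1 - c := by linarith
  have h2 : ∑ i ∈ Finset.range n, c ^ i = (1 - c ^ n) / (1 - c) := by
    rw [geom_sum_eq h1.ne n, ← neg_div_neg_eq, neg_sub, neg_sub]
  rw [h2, div_le_iff₀ hc, inv_mul_cancel₀ hc.ne']
  have : c ^ n ≥ 0 := pow_nonneg h0 n
  linarith

private lemma sqrt_pow' {x : ℝ} (hx : 0 ≤ x) (n : ℕ) :
    Real.sqrt (x ^ n) = Real.sqrt x ^ n := by
  induction n with
  | zero => simp
  | succ n ih => rw [pow_succ, pow_succ, Real.sqrt_mul (pow_nonneg hx n), ih]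

private lemma slice_le (k : ℕ) (x : ℝ) (hx : 0 ≤ x) (N r m : ℕ) :
    ∑ p ∈ (Finset.Icc 1 N).filter (fun p => p.Prime ∧ 2 ≤ r ∧ 1 ≤ m ∧
        ((p ^ r * m ^ k : ℕ) : ℝ) ≤ x), Real.log p
      ≤ Real.log 4 * Real.sqrt (x / (2 ^ (r - 2) * (m : ℝ) ^ k)) := by
  set B := Real.sqrt (x / (2 ^ (r - 2) * (m : ℝ) ^ k)) with hBdef
  have hBnn : 0 ≤ B := Real.sqrt_nonneg _
  have hsub : (Finset.Icc 1 N).filter (fun p => p.Prime ∧ 2 ≤ r ∧ 1 ≤ m ∧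
      ((p ^ r * m ^ k : ℕ) : ℝ) ≤ x) ⊆ (Finset.range (⌊B⌋₊ + 1)).filter Nat.Prime := by
    intro p hp
    simp only [Finset.mem_filter, Finset.mem_Icc] at hp
    obtain ⟨⟨hp1, hpN⟩, hpp, hr, hm, hle⟩ := hp
    have hm1 : (1 : ℝ) ≤ (m : ℝ) := by exact_mod_cast hm
    have hD : (0 : ℝ) < 2 ^ (r - 2) * (m : ℝ) ^ k := by positivity
    have h2p : (2 : ℝ) ≤ (p : ℝ) := by exact_mod_cast hpp.two_le
    have hle' : ((p : ℝ)) ^ r * (m : ℝ) ^ k ≤ x := by push_cast at hle; exact hle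
    have key : ((p : ℝ)) ^ 2 * (2 ^ (r - 2) * (m : ℝ) ^ k) ≤ x := by
      calc ((p : ℝ)) ^ 2 * (2 ^ (r - 2) * (m : ℝ) ^ k)
          = ((p : ℝ) ^ 2 * (2 : ℝ) ^ (r - 2)) * (m : ℝ) ^ k := by ring
        _ ≤ ((p : ℝ) ^ 2 * (p : ℝ) ^ (r - 2)) * (m : ℝ) ^ k := by gcongr
        _ = (p : ℝ) ^ r * (m : ℝ) ^ k := by
            rw [← pow_add]
            congr 2
            omega
        _ ≤ x := hle'
    have hpB : (p : ℝ) ≤ B := by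
      rw [hBdef, Real.le_sqrt (by positivity) (by positivity), le_div_iff₀ hD]
      exact key
    simp only [Finset.mem_filter, Finset.mem_range]
    exact ⟨Nat.lt_succ_of_le (Nat.le_floor hpB), hpp⟩
  calc ∑ p ∈ (Finset.Icc 1 N).filter (fun p => p.Prime ∧ 2 ≤ r ∧ 1 ≤ m ∧
          ((p ^ r * m ^ k : ℕ) : ℝ) ≤ x), Real.log p
      ≤ ∑ p ∈ (Finset.range (⌊B⌋₊ + 1)).filter Nat.Prime, Real.log p := by
        apply Finset.sum_le_sum_of_subset_of_nonneg hsub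
        intro p _ _
        exact Real.log_natCast_nonneg p
    _ ≤ (⌊B⌋₊ : ℝ) * Real.log 4 := theta_le _
    _ ≤ B * Real.log 4 := by
        apply mul_le_mul_of_nonneg_right (Nat.floor_le hBnn)
        exact Real.log_nonneg (by norm_num)
    _ = Real.log 4 * B := mul_comm _ _

private lemma rearrange (k : ℕ) (x : ℝ) (N : ℕ) :
    ∑ t ∈ ((Finset.Icc 1 N ×ˢ Finset.Icc 1 N ×ˢ Finset.Icc 1 N).filter
        (fun t : ℕ × ℕ × ℕ => t.1.Prime ∧ 2 ≤ t.2.1 ∧ 1 ≤ t.2.2 ∧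
          ((t.1 ^ t.2.1 * t.2.2 ^ k : ℕ) : ℝ) ≤ x)),
        Real.log t.1
      = ∑ r ∈ Finset.Icc 1 N, ∑ m ∈ Finset.Icc 1 N,
          ∑ p ∈ (Finset.Icc 1 N).filter (fun p => p.Prime ∧ 2 ≤ r ∧ 1 ≤ m ∧
            ((p ^ r * m ^ k : ℕ) : ℝ) ≤ x), Real.log p := by
  rw [Finset.sum_filter, Finset.sum_product]
  simp_rw [Finset.sum_product]
  rw [Finset.sum_comm]
  refine Finset.sum_congr rfl fun r _ => ?_
  rw [Finset.sum_comm]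
  refine Finset.sum_congr rfl fun m _ => ?_
  rw [Finset.sum_filter]

private lemma main_bound (k : ℕ) (x : ℝ) (hx : 0 ≤ x) :
    ∑ t ∈ ((Finset.Icc 1 ⌊x⌋₊ ×ˢ Finset.Icc 1 ⌊x⌋₊ ×ˢ Finset.Icc 1 ⌊x⌋₊).filter
        (fun t : ℕ × ℕ × ℕ => t.1.Prime ∧ 2 ≤ t.2.1 ∧ 1 ≤ t.2.2 ∧
          ((t.1 ^ t.2.1 * t.2.2 ^ k : ℕ) : ℝ) ≤ x)),
        Real.log t.1
      ≤ Real.log 4 * Real.sqrt x * ((2 * (1 - (Real.sqrt 2)⁻¹)⁻¹) *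
          ∑ m ∈ Finset.Icc 1 ⌊x⌋₊, (Real.sqrt ((m : ℝ) ^ k))⁻¹) := by
  set N := ⌊x⌋₊ with hN
  set c : ℝ := (Real.sqrt 2)⁻¹ with hc
  have hsqrt2 : (1 : ℝ) < Real.sqrt 2 := by
    have := Real.sqrt_lt_sqrt (by norm_num : (0:ℝ) ≤ 1) (by norm_num : (1:ℝ) < 2)
    rwa [Real.sqrt_one] at this
  have h2le : Real.sqrt 2 ≤ 2 := by
    nlinarith [Real.sq_sqrt (show (0:ℝ) ≤ 2 by norm_num), Real.sqrt_nonneg 2]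
  have hmul : (Real.sqrt 2)⁻¹ * Real.sqrt 2 = 1 := inv_mul_cancel₀ (by positivity)
  have hc0 : 0 ≤ c := by positivity
  have hc1 : c < 1 := by
    rw [hc, inv_lt_one_iff₀]; right; exact hsqrt2
  have hcsq : c ^ 2 = 2⁻¹ := by
    rw [hc, inv_pow, Real.sq_sqrt (by norm_num)]
  have hterm : ∀ r ∈ Finset.Icc 1 N, ∀ m ∈ Finset.Icc 1 N,
      Real.log 4 * Real.sqrt (x / (2 ^ (r - 2) * (m : ℝ) ^ k))
        = Real.log 4 * Real.sqrt x * c ^ (r - 2) * (Real.sqrt ((m : ℝ) ^ k))⁻¹ := by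
    intro r _ m hm
    simp only [Finset.mem_Icc] at hm
    have hm1 : (1 : ℝ) ≤ (m : ℝ) := by exact_mod_cast hm.1
    rw [Real.sqrt_div hx, Real.sqrt_mul (by positivity), sqrt_pow' (by norm_num : (0:ℝ) ≤ 2)]
    rw [hc, inv_pow]
    have h1 : (Real.sqrt 2) ^ (r - 2) ≠ 0 := by positivity
    have h2 : Real.sqrt ((m : ℝ) ^ k) ≠ 0 := by positivity
    field_simp
  calc ∑ t ∈ ((Finset.Icc 1 N ×ˢ Finset.Icc 1 N ×ˢ Finset.Icc 1 N).filter
          (fun t : ℕ × ℕ × ℕ => t.1.Prime ∧ 2 ≤ t.2.1 ∧ 1 ≤ t.2.2 ∧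
            ((t.1 ^ t.2.1 * t.2.2 ^ k : ℕ) : ℝ) ≤ x)),
          Real.log t.1
      = ∑ r ∈ Finset.Icc 1 N, ∑ m ∈ Finset.Icc 1 N,
          ∑ p ∈ (Finset.Icc 1 N).filter (fun p => p.Prime ∧ 2 ≤ r ∧ 1 ≤ m ∧
            ((p ^ r * m ^ k : ℕ) : ℝ) ≤ x), Real.log p := rearrange k x N
    _ ≤ ∑ r ∈ Finset.Icc 1 N, ∑ m ∈ Finset.Icc 1 N,
          Real.log 4 * Real.sqrt x * c ^ (r - 2) * (Real.sqrt ((m : ℝ) ^ k))⁻¹ := by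
        apply Finset.sum_le_sum
        intro r hr
        apply Finset.sum_le_sum
        intro m hm
        rw [← hterm r hr m hm]
        exact slice_le k x hx N r m
    _ = (∑ r ∈ Finset.Icc 1 N, c ^ (r - 2)) *
          (Real.log 4 * Real.sqrt x * ∑ m ∈ Finset.Icc 1 N, (Real.sqrt ((m : ℝ) ^ k))⁻¹) := by
        rw [Finset.sum_mul]
        apply Finset.sum_congr rfl
        intro r _
        rw [Finset.mul_sum, Finset.mul_sum]
        apply Finset.sum_congr rfl
        intro m _
        ring
    _ ≤ (2 * (1 - c)⁻¹) *
          (Real.log 4 * Real.sqrt x * ∑ m ∈ Finset.Icc 1 N, (Real.sqrt ((m : ℝ) ^ k))⁻¹) := by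
        apply mul_le_mul_of_nonneg_right
        · calc ∑ r ∈ Finset.Icc 1 N, c ^ (r - 2)
              ≤ ∑ r ∈ Finset.Icc 1 N, 2 * c ^ r := by
                apply Finset.sum_le_sum
                intro r _
                match r with
                | 0 => norm_num
                | 1 =>
                    show c ^ 0 ≤ 2 * c ^ 1
                    rw [pow_zero, pow_one, hc]
                    nlinarith [hmul, hc0]
                | (r + 2) =>
                    show c ^ r ≤ 2 * c ^ (r + 2)
                    exact le_of_eq (by rw [pow_add, hcsq]; ring)
            _ ≤ 2 * ∑ r ∈ Finset.range (N + 1), c ^ r := by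
                rw [Finset.mul_sum]
                apply Finset.sum_le_sum_of_subset_of_nonneg
                · intro r hr
                  simp only [Finset.mem_Icc] at hr
                  simp only [Finset.mem_range]
                  omega
                · intro r _ _
                  positivity
            _ ≤ 2 * (1 - c)⁻¹ := by
                apply mul_le_mul_of_nonneg_left (geo_le hc0 hc1 (N + 1)) (by norm_num)
        · apply mul_nonneg (mul_nonneg (Real.log_nonneg (by norm_num)) (Real.sqrt_nonneg _))
          apply Finset.sum_nonneg
          intro m _
          positivity
    _ = Real.log 4 * Real.sqrt x * ((2 * (1 - c)⁻¹) *
          ∑ m ∈ Finset.Icc 1 N, (Real.sqrt ((m : ℝ) ^ k))⁻¹) := by ring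

/-- For `k ≥ 2`, the sum of `log p` over triples `(p, r, m)` with `p` prime,
`r ≥ 2`, `m ≥ 1` and `p^r m^k ≤ x` is `O(x^{1/2} log x)` for `k = 2` and
`O(x^{1/2})` for `k ≥ 3`. -/
theorem sum_log_prime_power_isBigO (k : ℕ) (hk : 2 ≤ k) :
    (k = 2 →
      (fun x : ℝ =>
          ∑ t ∈ ((Finset.Icc 1 ⌊x⌋₊ ×ˢ Finset.Icc 1 ⌊x⌋₊ ×ˢ Finset.Icc 1 ⌊x⌋₊).filter
            (fun t : ℕ × ℕ × ℕ => t.1.Prime ∧ 2 ≤ t.2.1 ∧ 1 ≤ t.2.2 ∧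
              ((t.1 ^ t.2.1 * t.2.2 ^ k : ℕ) : ℝ) ≤ x)),
            Real.log t.1)
        =O[atTop] fun x : ℝ => x ^ ((1:ℝ)/2) * Real.log x) ∧
    (3 ≤ k →
      (fun x : ℝ =>
          ∑ t ∈ ((Finset.Icc 1 ⌊x⌋₊ ×ˢ Finset.Icc 1 ⌊x⌋₊ ×ˢ Finset.Icc 1 ⌊x⌋₊).filter
            (fun t : ℕ × ℕ × ℕ => t.1.Prime ∧ 2 ≤ t.2.1 ∧ 1 ≤ t.2.2 ∧
              ((t.1 ^ t.2.1 * t.2.2 ^ k : ℕ) : ℝ) ≤ x)),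
            Real.log t.1)
        =O[atTop] fun x : ℝ => x ^ ((1:ℝ)/2)) := by
  set C1 : ℝ := 2 * (1 - (Real.sqrt 2)⁻¹)⁻¹ with hC1
  have hsqrt2 : (1 : ℝ) < Real.sqrt 2 := by
    have := Real.sqrt_lt_sqrt (by norm_num : (0:ℝ) ≤ 1) (by norm_num : (1:ℝ) < 2)
    rwa [Real.sqrt_one] at this
  have hC1nn : 0 ≤ C1 := by
    have : (Real.sqrt 2)⁻¹ < 1 := by
      rw [inv_lt_one_iff₀]; right; exact hsqrt2
    have h' : 0 < 1 - (Real.sqrt 2)⁻¹ := by linarith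
    positivity
  have hlog4 : 0 ≤ Real.log 4 := Real.log_nonneg (by norm_num)
  have hSnn : ∀ x : ℝ, 0 ≤ ∑ t ∈ ((Finset.Icc 1 ⌊x⌋₊ ×ˢ Finset.Icc 1 ⌊x⌋₊ ×ˢ Finset.Icc 1 ⌊x⌋₊).filter
      (fun t : ℕ × ℕ × ℕ => t.1.Prime ∧ 2 ≤ t.2.1 ∧ 1 ≤ t.2.2 ∧
        ((t.1 ^ t.2.1 * t.2.2 ^ k : ℕ) : ℝ) ≤ x)), Real.log t.1 := by
    intro x
    apply Finset.sum_nonneg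
    intro t _
    exact Real.log_natCast_nonneg _
  constructor
  · -- k = 2
    intro hk2
    subst hk2
    rw [isBigO_iff]
    refine ⟨Real.log 4 * (C1 * 2), ?_⟩
    filter_upwards [eventually_ge_atTop (3 : ℝ)] with x hx3
    have hx0 : (0:ℝ) ≤ x := by linarith
    have hx1 : (1:ℝ) ≤ x := by linarith
    have hlogx1 : 1 ≤ Real.log x := by
      rw [Real.le_log_iff_exp_le (by linarith)]
      calc Real.exp 1 ≤ 2.7182818286 := Real.exp_one_lt_d9.le
        _ ≤ 3 := by norm_num
        _ ≤ x := hx3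
    have hH : ∑ m ∈ Finset.Icc 1 ⌊x⌋₊, (Real.sqrt ((m : ℝ) ^ 2))⁻¹ ≤ 2 * Real.log x := by
      have he : ∑ m ∈ Finset.Icc 1 ⌊x⌋₊, (Real.sqrt ((m : ℝ) ^ 2))⁻¹
          = ((harmonic ⌊x⌋₊ : ℚ) : ℝ) := by
        rw [harmonic_eq_sum_Icc]
        push_cast
        apply Finset.sum_congr rfl
        intro m _
        rw [Real.sqrt_sq (by positivity)]
      rw [he]
      calc ((harmonic ⌊x⌋₊ : ℚ) : ℝ) ≤ 1 + Real.log ⌊x⌋₊ := harmonic_le_one_add_log _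
        _ ≤ 1 + Real.log x := by
            gcongr
            · have : (1:ℕ) ≤ ⌊x⌋₊ := Nat.le_floor (by exact_mod_cast hx1)
              exact_mod_cast this
            · exact Nat.floor_le hx0
        _ ≤ 2 * Real.log x := by linarith
    rw [Real.norm_of_nonneg (hSnn x)]
    have hrhs : x ^ ((1:ℝ)/2) * Real.log x = Real.sqrt x * Real.log x := by
      rw [Real.sqrt_eq_rpow]
    have hrhsnn : 0 ≤ x ^ ((1:ℝ)/2) * Real.log x := by
      rw [hrhs]
      exact mul_nonneg (Real.sqrt_nonneg x) (by linarith)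
    rw [Real.norm_of_nonneg hrhsnn, hrhs]
    calc (∑ t ∈ ((Finset.Icc 1 ⌊x⌋₊ ×ˢ Finset.Icc 1 ⌊x⌋₊ ×ˢ Finset.Icc 1 ⌊x⌋₊).filter
            (fun t : ℕ × ℕ × ℕ => t.1.Prime ∧ 2 ≤ t.2.1 ∧ 1 ≤ t.2.2 ∧
              ((t.1 ^ t.2.1 * t.2.2 ^ 2 : ℕ) : ℝ) ≤ x)), Real.log t.1)
        ≤ Real.log 4 * Real.sqrt x * (C1 *
            ∑ m ∈ Finset.Icc 1 ⌊x⌋₊, (Real.sqrt ((m : ℝ) ^ 2))⁻¹) := main_bound 2 x hx0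
      _ ≤ Real.log 4 * Real.sqrt x * (C1 * (2 * Real.log x)) := by
          have h1 : 0 ≤ Real.log 4 * Real.sqrt x := mul_nonneg hlog4 (Real.sqrt_nonneg x)
          apply mul_le_mul_of_nonneg_left _ h1
          exact mul_le_mul_of_nonneg_left hH hC1nn
      _ = Real.log 4 * (C1 * 2) * (Real.sqrt x * Real.log x) := by ring
  · -- 3 ≤ k
    intro hk3
    set C2 : ℝ := ∑' n : ℕ, (((n : ℝ)) ^ ((3:ℝ)/2))⁻¹ with hC2
    have hsummable : Summable (fun n : ℕ => (((n : ℝ)) ^ ((3:ℝ)/2))⁻¹) :=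
      Real.summable_nat_rpow_inv.mpr (by norm_num)
    rw [isBigO_iff]
    refine ⟨Real.log 4 * (C1 * C2), ?_⟩
    filter_upwards [eventually_ge_atTop (1 : ℝ)] with x hx1
    have hx0 : (0:ℝ) ≤ x := by linarith
    have hH : ∑ m ∈ Finset.Icc 1 ⌊x⌋₊, (Real.sqrt ((m : ℝ) ^ k))⁻¹ ≤ C2 := by
      calc ∑ m ∈ Finset.Icc 1 ⌊x⌋₊, (Real.sqrt ((m : ℝ) ^ k))⁻¹
          ≤ ∑ m ∈ Finset.Icc 1 ⌊x⌋₊, (((m : ℝ)) ^ ((3:ℝ)/2))⁻¹ := by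
            apply Finset.sum_le_sum
            intro m hm
            simp only [Finset.mem_Icc] at hm
            have hm1 : (1 : ℝ) ≤ (m : ℝ) := by exact_mod_cast hm.1
            have hr : ((m : ℝ)) ^ ((3:ℝ)/2) = Real.sqrt ((m : ℝ) ^ 3) := by
              rw [Real.sqrt_eq_rpow, ← Real.rpow_natCast ((m : ℝ)) 3,
                ← Real.rpow_mul (by positivity)]
              norm_num
            rw [hr]
            have hpos : 0 < Real.sqrt ((m : ℝ) ^ 3) := Real.sqrt_pos.mpr (by positivity)
            gcongr
        _ ≤ C2 := by
            rw [hC2]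
            apply Summable.sum_le_tsum
            · intro m _
              positivity
            · exact hsummable
    rw [Real.norm_of_nonneg (hSnn x)]
    have hrhs : x ^ ((1:ℝ)/2) = Real.sqrt x := (Real.sqrt_eq_rpow x).symm
    have hrhsnn : 0 ≤ x ^ ((1:ℝ)/2) := by rw [hrhs]; exact Real.sqrt_nonneg x
    rw [Real.norm_of_nonneg hrhsnn, hrhs]
    calc (∑ t ∈ ((Finset.Icc 1 ⌊x⌋₊ ×ˢ Finset.Icc 1 ⌊x⌋₊ ×ˢ Finset.Icc 1 ⌊x⌋₊).filter
            (fun t : ℕ × ℕ × ℕ => t.1.Prime ∧ 2 ≤ t.2.1 ∧ 1 ≤ t.2.2 ∧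
              ((t.1 ^ t.2.1 * t.2.2 ^ k : ℕ) : ℝ) ≤ x)), Real.log t.1)
        ≤ Real.log 4 * Real.sqrt x * (C1 *
            ∑ m ∈ Finset.Icc 1 ⌊x⌋₊, (Real.sqrt ((m : ℝ) ^ k))⁻¹) := main_bound k x hx0
      _ ≤ Real.log 4 * Real.sqrt x * (C1 * C2) := by
          have h1 : 0 ≤ Real.log 4 * Real.sqrt x := mul_nonneg hlog4 (Real.sqrt_nonneg x)
          apply mul_le_mul_of_nonneg_left _ h1
          exact mul_le_mul_of_nonneg_left hH hC1nn
      _ = Real.log 4 * (C1 * C2) * Real.sqrt x := by ring
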